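/- Let F be an entire function and (z_i) a sequence of pairwise distinct complex numbers with z_i → 0 and |z_i| ≤ R. Then the Newton series Σ_{n=0}^{∞} F^{(n)}(z₁, …, z_{n+1}) ∏_{m=1}^{n} (z − z_m) converges absolutely and uniformly on compact subsets of ℂ, and its sum equals F(z) for every z ∈ ℂ. -/

import Mathlib

/-- Divided differences: the list holds the points in reverse order,
`divDiff F [z_{n+1}, z_n, …, z₁] = F^{(n)}(z₁, …, z_{n+1})`. -/
noncomputable def divDiff (F : ℂ → ℂ) : List ℂ → ℂ
  | [] => 0
  | [z] => F z
  | a :: b :: l => (divDiff F (b :: l) - divDiff F (a :: l)) / (b - a)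
termination_by l => l.length

/-- Divided difference `F^{(n)}(z 0, …, z n)` of a tuple. -/
noncomputable def divDiffT (F : ℂ → ℂ) (n : ℕ) (z : Fin (n + 1) → ℂ) : ℂ :=
  divDiff F (List.ofFn z).reverse

open Metric Complex Filter

namespace NewtonAux

noncomputable def plist (l : List ℂ) (ζ : ℂ) : ℂ := (l.map (fun p => ζ - p)).prod

lemma plist_nil (ζ : ℂ) : plist [] ζ = 1 := rfl
lemma plist_cons (a : ℂ) (l : List ℂ) (ζ : ℂ) : plist (a :: l) ζ = (ζ - a) * plist l ζ := rfl

lemma plist_continuous (l : List ℂ) : Continuous (fun ζ => plist l ζ) := by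
  induction l with
  | nil => simpa [plist_nil] using continuous_const
  | cons a l ih =>
    show Continuous (fun ζ => (ζ - a) * plist l ζ)
    exact (continuous_id.sub continuous_const).mul ih

lemma plist_ne_zero {l : List ℂ} {ζ : ℂ} (h : ∀ p ∈ l, p ≠ ζ) : plist l ζ ≠ 0 := by
  induction l with
  | nil => simp [plist_nil]
  | cons a l ih =>
    rw [plist_cons]
    exact mul_ne_zero (sub_ne_zero.2 fun e => (h a (by simp)) e.symm)
      (ih fun p hp => h p (by simp [hp]))

lemma norm_plist_ge {l : List ℂ} {ρ r : ℝ} {ζ : ℂ} (hζ : ‖ζ‖ = r) (hρr : ρ ≤ r)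
    (hl : ∀ p ∈ l, ‖p‖ ≤ ρ) : (r - ρ) ^ l.length ≤ ‖plist l ζ‖ := by
  induction l with
  | nil => simp [plist_nil]
  | cons a l ih =>
    rw [plist_cons, norm_mul, List.length_cons, pow_succ, mul_comm ((r-ρ)^l.length)]
    have h1 : r - ρ ≤ ‖ζ - a‖ := by
      have := norm_sub_norm_le ζ a
      have ha := hl a (by simp)
      linarith
    exact mul_le_mul h1 (ih fun p hp => hl p (by simp [hp])) (pow_nonneg (by linarith) _) (by linarith [norm_nonneg (ζ - a), h1])

lemma pow_div_aux {x y q : ℝ} (hq : q ≠ 0) (n : ℕ) :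
    x / q ^ (n + 1) * y ^ n = (x / q) * (y / q) ^ n := by
  rw [div_pow, pow_succ]
  field_simp

noncomputable def cInt (F : ℂ → ℂ) (r : ℝ) (l : List ℂ) : ℂ :=
  (2 * Real.pi * I)⁻¹ • ∮ ζ in C(0, r), (plist l ζ)⁻¹ • F ζ

lemma integrable_aux (F : ℂ → ℂ) (hF : Continuous F) {r : ℝ} (hr : 0 < r) {l : List ℂ}
    (hl : ∀ p ∈ l, ‖p‖ < r) :
    CircleIntegrable (fun ζ => (plist l ζ)⁻¹ • F ζ) 0 r := by
  apply ContinuousOn.circleIntegrable hr.le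
  refine ContinuousOn.smul (f := fun ζ => (plist l ζ)⁻¹) ?_ hF.continuousOn
  apply ContinuousOn.inv₀ (plist_continuous l).continuousOn
  intro ζ hζ
  have hζ' : ‖ζ‖ = r := mem_sphere_zero_iff_norm.mp hζ
  exact plist_ne_zero fun p hp e => by rw [← e] at hζ'; exact absurd hζ' (ne_of_lt (hl p hp))

lemma rep (F : ℂ → ℂ) (hF : Differentiable ℂ F) {r : ℝ} (hr : 0 < r) :
    ∀ (n : ℕ) (l : List ℂ), l.length ≤ n → l ≠ [] → l.Nodup → (∀ p ∈ l, ‖p‖ < r) →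
      divDiff F l = cInt F r l := by
  intro n
  induction n with
  | zero => intro l hn hne _ _; cases l with
    | nil => exact absurd rfl hne
    | cons a t => simp at hn
  | succ n ih =>
    intro l hn hne hnd hl
    match l with
    | [a] =>
      have ha : a ∈ ball (0:ℂ) r := by
        simpa [mem_ball_zero_iff] using hl a (by simp)
      have hd : DiffContOnCl ℂ F (ball (0:ℂ) r) := ⟨hF.differentiableOn, hF.continuous.continuousOn⟩
      have := hd.two_pi_i_inv_smul_circleIntegral_sub_inv_smul ha
      rw [show divDiff F [a] = F a by simp [divDiff], ← this]
      unfold cInt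
      congr 1
      apply circleIntegral.integral_congr hr.le
      intro ζ hζ
      simp [plist_cons, plist_nil]
    | a :: b :: t =>
      have hba : b - a ≠ 0 := sub_ne_zero.2 fun e => (List.nodup_cons.mp hnd).1 (e ▸ by simp)
      have hndb : (b :: t).Nodup := (List.nodup_cons.mp hnd).2
      have hnda : (a :: t).Nodup := by
        rw [List.nodup_cons] at hnd ⊢
        exact ⟨fun h => hnd.1 (by simp [h]), (List.nodup_cons.mp hnd.2).2⟩
      have hlen : t.length + 1 ≤ n := by simpa using hn
      have hrb := ih (b :: t) (by simpa using hlen) (by simp) hndb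
        (fun p hp => hl p (by simp at hp ⊢; tauto))
      have hra := ih (a :: t) (by simpa using hlen) (by simp) hnda
        (fun p hp => hl p (by simp at hp ⊢; tauto))
      rw [divDiff, hrb, hra, div_eq_iff hba]
      · -- (cInt (b::t) - cInt (a::t)) = cInt (a::b::t) * (b - a)
        unfold cInt
        rw [← smul_sub]
        rw [← circleIntegral.integral_sub
            (integrable_aux F hF.continuous hr fun p hp => hl p (by simp at hp ⊢; tauto))
            (integrable_aux F hF.continuous hr fun p hp => hl p (by simp at hp ⊢; tauto))]
        have hcong : ∀ ζ ∈ sphere (0:ℂ) r,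
            (plist (b :: t) ζ)⁻¹ • F ζ - (plist (a :: t) ζ)⁻¹ • F ζ
              = (b - a) • ((plist (a :: b :: t) ζ)⁻¹ • F ζ) := by
          intro ζ hζ
          have hζ' : ‖ζ‖ = r := mem_sphere_zero_iff_norm.mp hζ
          have hne' : ∀ p ∈ (a :: b :: t), ζ - p ≠ 0 := by
            intro p hp
            exact sub_ne_zero.2 fun e => by rw [e] at hζ'; exact absurd hζ' (ne_of_lt (hl p hp))
          have ha' : ζ - a ≠ 0 := hne' a (by simp)
          have hb' : ζ - b ≠ 0 := hne' b (by simp)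
          have ht' : plist t ζ ≠ 0 := plist_ne_zero fun p hp e =>
            hne' p (by simp [hp]) (by rw [e, sub_self])
          simp only [plist_cons, smul_eq_mul]
          field_simp
          ring
        rw [circleIntegral.integral_congr hr.le hcong, circleIntegral.integral_smul,
          smul_comm ((2 * (Real.pi:ℂ) * I)⁻¹) (b - a), smul_eq_mul]
        ring

end NewtonAux

namespace NewtonAux

lemma norm_two_pi_I : ‖(2 * (Real.pi:ℂ) * I)‖ = 2 * Real.pi := by
  simp [norm_mul, Complex.norm_real, _root_.abs_of_nonneg Real.pi_pos.le]

lemma divDiff_norm_le (F : ℂ → ℂ) (hF : Differentiable ℂ F) {r ρ C : ℝ} (hr : 0 < r)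
    (hρ0 : 0 ≤ ρ) (hρr : ρ < r) (hC0 : 0 ≤ C) (hC : ∀ ζ ∈ sphere (0:ℂ) r, ‖F ζ‖ ≤ C)
    {l : List ℂ} (hne : l ≠ []) (hnd : l.Nodup) (hl : ∀ p ∈ l, ‖p‖ ≤ ρ) :
    ‖divDiff F l‖ ≤ r * C / (r - ρ) ^ l.length := by
  rw [rep F hF hr l.length l le_rfl hne hnd
    (fun p hp => lt_of_le_of_lt (hl p hp) hρr)]
  unfold cInt
  rw [norm_smul, norm_inv, norm_two_pi_I]
  have hpow : 0 < (r - ρ) ^ l.length := pow_pos (by linarith) _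
  have hbd : ∀ ζ ∈ sphere (0:ℂ) r, ‖(plist l ζ)⁻¹ • F ζ‖ ≤ C / (r - ρ) ^ l.length := by
    intro ζ hζ
    have hζ' : ‖ζ‖ = r := mem_sphere_zero_iff_norm.mp hζ
    rw [norm_smul, norm_inv]
    rw [inv_mul_eq_div]
    exact div_le_div₀ hC0 (hC ζ hζ) hpow (norm_plist_ge hζ' hρr.le hl)
  have := circleIntegral.norm_integral_le_of_norm_le_const hr.le hbd
  calc (2 * Real.pi)⁻¹ * ‖∮ ζ in C(0, r), (plist l ζ)⁻¹ • F ζ‖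
      ≤ (2 * Real.pi)⁻¹ * (2 * Real.pi * r * (C / (r - ρ) ^ l.length)) := by
        exact mul_le_mul_of_nonneg_left this (by positivity)
    _ = r * C / (r - ρ) ^ l.length := by
        field_simp

/-- The reversed list of the first `N` points. -/
noncomputable def revl (z : ℕ → ℂ) (N : ℕ) : List ℂ := (List.ofFn (fun i : Fin N => z i)).reverse

lemma revl_succ (z : ℕ → ℂ) (N : ℕ) : revl z (N + 1) = z N :: revl z N := by
  unfold revl
  rw [List.ofFn_succ']
  simp

lemma revl_length (z : ℕ → ℂ) (N : ℕ) : (revl z N).length = N := by simp [revl]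

lemma mem_revl {z : ℕ → ℂ} {N : ℕ} {p : ℂ} (hp : p ∈ revl z N) : ∃ i < N, p = z i := by
  unfold revl at hp
  rw [List.mem_reverse, List.mem_ofFn] at hp
  obtain ⟨i, hi⟩ := hp
  exact ⟨i, i.2, hi.symm⟩

lemma revl_nodup {z : ℕ → ℂ} (hinj : Function.Injective z) (N : ℕ) : (revl z N).Nodup := by
  unfold revl
  rw [List.nodup_reverse]
  exact List.nodup_ofFn.mpr (fun i j h => Fin.ext (hinj h))

lemma newton (F : ℂ → ℂ) (z : ℕ → ℂ) (w : ℂ) (hw : ∀ i, w ≠ z i) (N : ℕ) :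
    F w = (∑ n ∈ Finset.range N, divDiff F (revl z (n + 1)) * ∏ m ∈ Finset.range n, (w - z m))
      + divDiff F (w :: revl z N) * ∏ m ∈ Finset.range N, (w - z m) := by
  induction N with
  | zero => simp [revl, divDiff]
  | succ N ih =>
    have hrec : divDiff F (w :: revl z N)
        = divDiff F (revl z (N + 1)) + (w - z N) * divDiff F (w :: revl z (N + 1)) := by
      rw [revl_succ]
      have h := divDiff F (w :: z N :: revl z N) -- dummy
      rw [show divDiff F (w :: z N :: revl z N)
          = (divDiff F (z N :: revl z N) - divDiff F (w :: revl z N)) / (z N - w) from by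
        rw [divDiff]]
      have hzw : z N - w ≠ 0 := sub_ne_zero.2 fun e => hw N e.symm
      field_simp
      ring
    rw [ih, hrec, Finset.sum_range_succ, Finset.prod_range_succ]
    ring

end NewtonAux


open Filter

open NewtonAux Metric Complex in
/-- The Newton series of an entire function along a sequence of pairwise distinct points
`z_i → 0`, `|z_i| ≤ R`, converges absolutely, uniformly on compact sets, and its sum is `F`. -/
theorem stmt16 (F : ℂ → ℂ) (hF : Differentiable ℂ F) (z : ℕ → ℂ) (R : ℝ)
    (hinj : Function.Injective z) (hz : Tendsto z atTop (nhds 0)) (hzR : ∀ i, ‖z i‖ ≤ R) :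
    (∀ w : ℂ, Summable (fun n : ℕ =>
        ‖divDiffT F n (fun i : Fin (n + 1) => z (i : ℕ))
            * ∏ m ∈ Finset.range n, (w - z m)‖)) ∧
    (∀ w : ℂ, HasSum (fun n : ℕ =>
        divDiffT F n (fun i : Fin (n + 1) => z (i : ℕ))
          * ∏ m ∈ Finset.range n, (w - z m)) (F w)) ∧
    (∀ K : Set ℂ, IsCompact K → TendstoUniformlyOn
        (fun (N : ℕ) (w : ℂ) => ∑ n ∈ Finset.range N,
          divDiffT F n (fun i : Fin (n + 1) => z (i : ℕ))
            * ∏ m ∈ Finset.range n, (w - z m))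
        F atTop K) := by
  classical
  have hR0 : 0 ≤ R := le_trans (norm_nonneg _) (hzR 0)
  set term : ℕ → ℂ → ℂ := fun n w =>
    divDiffT F n (fun i : Fin (n + 1) => z (i : ℕ)) * ∏ m ∈ Finset.range n, (w - z m) with hterm
  have hdT : ∀ n, divDiffT F n (fun i : Fin (n + 1) => z (i : ℕ)) = divDiff F (revl z (n + 1)) :=
    fun n => rfl
  have hprod : ∀ (A : ℝ) (w : ℂ), ‖w‖ ≤ A → ∀ n : ℕ,
      ‖∏ m ∈ Finset.range n, (w - z m)‖ ≤ (A + R) ^ n := by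
    intro A w hw n
    rw [norm_prod]
    calc ∏ m ∈ Finset.range n, ‖w - z m‖ ≤ ∏ _m ∈ Finset.range n, (A + R) := by
          apply Finset.prod_le_prod (fun i _ => norm_nonneg _)
          intro i _
          calc ‖w - z i‖ ≤ ‖w‖ + ‖z i‖ := norm_sub_le _ _
            _ ≤ A + R := add_le_add hw (hzR i)
      _ = (A + R) ^ n := by rw [Finset.prod_const, Finset.card_range]
  have key : ∀ A : ℝ, 0 ≤ A → ∃ u : ℕ → ℝ, Summable u ∧
      ∀ (n : ℕ) (w : ℂ), ‖w‖ ≤ A → ‖term n w‖ ≤ u n := by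
    intro A hA
    set r : ℝ := 2 * R + 2 * A + 1 with hrdef
    have hr : 0 < r := by positivity
    obtain ⟨C, hC⟩ := (isCompact_sphere (0:ℂ) r).exists_bound_of_continuousOn
      hF.continuous.continuousOn
    set C' : ℝ := max C 0 with hC'def
    have hC'0 : 0 ≤ C' := le_max_right _ _
    have hC' : ∀ ζ ∈ sphere (0:ℂ) r, ‖F ζ‖ ≤ C' := fun ζ h => (hC ζ h).trans (le_max_left _ _)
    have hrR : R < r := by simp only [hrdef]; linarith
    refine ⟨fun n => (r * C' / (r - R)) * ((A + R) / (r - R)) ^ n, ?_, ?_⟩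
    · apply Summable.mul_left
      apply summable_geometric_of_lt_one (div_nonneg (by linarith) (by linarith))
      rw [div_lt_one (by linarith)]
      simp only [hrdef]; linarith
    · intro n w hw
      have h1 : ‖divDiff F (revl z (n + 1))‖ ≤ r * C' / (r - R) ^ (n + 1) := by
        have hlen : (revl z (n + 1)).length = n + 1 := revl_length z (n + 1)
        have := divDiff_norm_le F hF hr hR0 hrR hC'0 hC'
          (l := revl z (n + 1)) (by rw [← List.length_pos_iff_ne_nil, hlen]; omega)
          (revl_nodup hinj _)
          (fun p hp => by obtain ⟨i, _, e⟩ := mem_revl hp; rw [e]; exact hzR i)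
        rwa [hlen] at this
      rw [hterm, norm_mul, hdT n]
      calc ‖divDiff F (revl z (n + 1))‖ * ‖∏ m ∈ Finset.range n, (w - z m)‖
          ≤ (r * C' / (r - R) ^ (n + 1)) * (A + R) ^ n := by
            apply mul_le_mul h1 (hprod A w hw n) (norm_nonneg _)
              (div_nonneg (mul_nonneg hr.le hC'0) (pow_nonneg (by linarith) _))
        _ = (r * C' / (r - R)) * ((A + R) / (r - R)) ^ n :=
            pow_div_aux (by linarith) n
  have hsum : ∀ w : ℂ, Summable (fun n => ‖term n w‖) := by
    intro w
    obtain ⟨u, hu, hb⟩ := key ‖w‖ (norm_nonneg w)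
    exact Summable.of_nonneg_of_le (fun n => norm_nonneg _) (fun n => hb n w le_rfl) hu
  set T : ℂ → ℂ := fun w => ∑' n, term n w with hT
  have hUnif : ∀ A : ℝ, 0 ≤ A → TendstoUniformlyOn
      (fun N w => ∑ n ∈ Finset.range N, term n w) T atTop (closedBall 0 A) := by
    intro A hA
    obtain ⟨u, hu, hb⟩ := key A hA
    exact tendstoUniformlyOn_tsum_nat hu (fun n x hx => hb n x (mem_closedBall_zero_iff.mp hx))
  have hpcont : ∀ N : ℕ, Continuous (fun w => ∑ n ∈ Finset.range N, term n w) := by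
    intro N
    apply continuous_finset_sum
    intro n _
    exact continuous_const.mul (continuous_finset_prod _ fun m _ =>
      continuous_id.sub continuous_const)
  have hTcont : Continuous T := by
    rw [continuous_iff_continuousAt]
    intro w
    have hconOn : ContinuousOn T (closedBall 0 (‖w‖ + 1)) :=
      (hUnif (‖w‖ + 1) (by positivity)).continuousOn
        (Frequently.of_forall fun N => (hpcont N).continuousOn)
    exact hconOn.continuousAt (closedBall_mem_nhds_of_mem (by simp [mem_ball_zero_iff]))
  have hEq : ∀ w ∉ Set.range z, T w = F w := by
    intro w hw
    have hw' : ∀ i, w ≠ z i := fun i e => hw ⟨i, e.symm⟩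
    have h1 : Tendsto (fun N => ∑ n ∈ Finset.range N, term n w) atTop (nhds (T w)) :=
      ((hsum w).of_norm).hasSum.tendsto_sum_nat
    set A : ℝ := ‖w‖ with hAdef
    have hA0 : 0 ≤ A := norm_nonneg w
    set r : ℝ := 2 * R + 2 * A + 1 with hrdef
    have hr : 0 < r := by positivity
    obtain ⟨C, hC⟩ := (isCompact_sphere (0:ℂ) r).exists_bound_of_continuousOn
      hF.continuous.continuousOn
    set C' : ℝ := max C 0 with hC'def
    have hC'0 : 0 ≤ C' := le_max_right _ _
    have hC' : ∀ ζ ∈ sphere (0:ℂ) r, ‖F ζ‖ ≤ C' := fun ζ h => (hC ζ h).trans (le_max_left _ _)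
    set ρ : ℝ := R + A with hρdef
    have hρ0 : 0 ≤ ρ := by positivity
    have hρr : ρ < r := by simp only [hrdef, hρdef]; linarith
    have hrem : ∀ N : ℕ, ‖F w - ∑ n ∈ Finset.range N, term n w‖
        ≤ (r * C' / (r - ρ)) * ((A + R) / (r - ρ)) ^ N := by
      intro N
      have hnewt := newton F z w hw' N
      have hsub : F w - ∑ n ∈ Finset.range N, term n w
          = divDiff F (w :: revl z N) * ∏ m ∈ Finset.range N, (w - z m) := by
        conv_lhs => rw [hnewt]
        simp only [hterm, hdT]
        ring
      rw [hsub, norm_mul]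
      have hnd : (w :: revl z N).Nodup := List.nodup_cons.mpr
        ⟨fun h => by obtain ⟨i, _, e⟩ := mem_revl h; exact (hw' i) e, revl_nodup hinj N⟩
      have hpts : ∀ p ∈ (w :: revl z N), ‖p‖ ≤ ρ := by
        intro p hp
        rcases List.mem_cons.mp hp with h | h
        · rw [h, hρdef]; linarith
        · obtain ⟨i, _, e⟩ := mem_revl h; rw [e, hρdef]; linarith [hzR i]
      have h1' : ‖divDiff F (w :: revl z N)‖ ≤ r * C' / (r - ρ) ^ (N + 1) := by
        have := divDiff_norm_le F hF hr hρ0 hρr hC'0 hC'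
          (l := w :: revl z N) (by simp) hnd hpts
        rwa [List.length_cons, revl_length] at this
      calc ‖divDiff F (w :: revl z N)‖ * ‖∏ m ∈ Finset.range N, (w - z m)‖
          ≤ (r * C' / (r - ρ) ^ (N + 1)) * (A + R) ^ N :=
            mul_le_mul h1' (hprod A w le_rfl N) (norm_nonneg _)
              (div_nonneg (mul_nonneg hr.le hC'0) (pow_nonneg (by linarith) _))
        _ = (r * C' / (r - ρ)) * ((A + R) / (r - ρ)) ^ N :=
            pow_div_aux (by linarith) N
    have hq : Tendsto (fun N : ℕ => (r * C' / (r - ρ)) * ((A + R) / (r - ρ)) ^ N)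
        atTop (nhds 0) := by
      rw [show (0:ℝ) = (r * C' / (r - ρ)) * 0 by ring]
      apply Tendsto.const_mul
      apply tendsto_pow_atTop_nhds_zero_of_lt_one (div_nonneg (by linarith) (by linarith))
      rw [div_lt_one (by linarith)]
      simp only [hrdef, hρdef]; linarith
    have h2 : Tendsto (fun N => ∑ n ∈ Finset.range N, term n w) atTop (nhds (F w)) := by
      have h3 : Tendsto (fun N => F w - ∑ n ∈ Finset.range N, term n w) atTop (nhds 0) :=
        squeeze_zero_norm hrem hq
      have := tendsto_const_nhds (x := F w) (f := atTop (α := ℕ)).sub h3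
      simpa using this
    exact tendsto_nhds_unique h1 h2
  have hTF : T = F := by
    apply Continuous.ext_on ((Set.countable_range z).dense_compl ℂ) hTcont hF.continuous
    intro w hw
    exact hEq w hw
  refine ⟨hsum, fun w => ?_, fun K hK => ?_⟩
  · have h := ((hsum w).of_norm).hasSum
    have h2 : (∑' n, term n w) = F w := congrFun hTF w
    rwa [h2] at h
  · obtain ⟨A, hA⟩ := hK.isBounded.subset_closedBall 0
    have h := (hUnif (max A 0) (le_max_right _ _)).mono
      (hA.trans (closedBall_subset_closedBall (le_max_left _ _)))
    rwa [hTF] at h
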